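/- Let H and K be complex Hilbert spaces, G₁ : H →L[ℂ] K and G₂ : K →L[ℂ] H bounded linear operators, Π₁₁ : K →L[ℂ] K and Π₂₂ : H →L[ℂ] H bounded self-adjoint operators, and Π₁₂ : H →L[ℂ] K a bounded operator. Define σ(v, w) := re⟪v, Π₁₁ v⟫ + 2·re⟪v, Π₁₂ w⟫ + re⟪w, Π₂₂ w⟫ for v ∈ K, w ∈ H. Suppose there exists ε > 0 such that σ(G₁ u, u) ≤ −ε‖u‖² for all u ∈ H, and σ(v, G₂ v) ≥ 0 for all v ∈ K. Then there exists c > 0 such that ‖u − G₂ (G₁ u)‖ ≥ c‖u‖ for all u ∈ H. -/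
import Mathlib


open scoped InnerProductSpace

lemma neg_re_inner_le_norm_mul_norm {E : Type*} [NormedAddCommGroup E]
    [InnerProductSpace ℂ E] (a b : E) : -(⟪a, b⟫_ℂ).re ≤ ‖a‖ * ‖b‖ := by
  have h1 : |(⟪a, b⟫_ℂ).re| ≤ ‖⟪a, b⟫_ℂ‖ := Complex.abs_re_le_norm _
  have h2 : ‖⟪a, b⟫_ℂ‖ ≤ ‖a‖ * ‖b‖ := norm_inner_le_norm a b
  have := neg_abs_le ((⟪a, b⟫_ℂ).re)
  linarith

/-- IQC feedback-stability core bound: if `G₁` satisfies the strict IQC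
`σ(G₁u, u) ≤ −ε‖u‖²` and `G₂` the complementary IQC `σ(v, G₂v) ≥ 0` for the
quadratic form `σ(v,w) = re⟪v, Q₁₁v⟫ + 2 re⟪v, Q₁₂w⟫ + re⟪w, Q₂₂w⟫` of the
self-adjoint block multiplier `Π = [[Q₁₁, Q₁₂],[Q₁₂*, Q₂₂]]`, then `I − G₂G₁`
is bounded below. -/
theorem iqc_return_difference_bounded_below
    {H K : Type*} [NormedAddCommGroup H] [InnerProductSpace ℂ H] [CompleteSpace H]
    [NormedAddCommGroup K] [InnerProductSpace ℂ K] [CompleteSpace K]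
    (G₁ : H →L[ℂ] K) (G₂ : K →L[ℂ] H)
    (Q₁₁ : K →L[ℂ] K) (Q₂₂ : H →L[ℂ] H) (Q₁₂ : H →L[ℂ] K)
    (h₁₁ : IsSelfAdjoint Q₁₁) (h₂₂ : IsSelfAdjoint Q₂₂)
    (ε : ℝ) (hε : 0 < ε)
    (hG₁ : ∀ u : H,
      (⟪G₁ u, Q₁₁ (G₁ u)⟫_ℂ).re + 2 * (⟪G₁ u, Q₁₂ u⟫_ℂ).re + (⟪u, Q₂₂ u⟫_ℂ).re ≤
        -ε * ‖u‖ ^ 2)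
    (hG₂ : ∀ v : K,
      (⟪v, Q₁₁ v⟫_ℂ).re + 2 * (⟪v, Q₁₂ (G₂ v)⟫_ℂ).re + (⟪G₂ v, Q₂₂ (G₂ v)⟫_ℂ).re ≥ 0) :
    ∃ c : ℝ, 0 < c ∧ ∀ u : H, ‖u - G₂ (G₁ u)‖ ≥ c * ‖u‖ := by
  set L : ℝ := 2 * ‖Q₁₂‖ * ‖G₁‖ + ‖Q₂₂‖ + ‖Q₂₂‖ * ‖G₂‖ * ‖G₁‖ with hL
  refine ⟨ε / (L + 1), by positivity, fun u => ?_⟩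
  set v : K := G₁ u with hv
  set w : H := G₂ v with hw
  set e : H := u - w with he
  have hu : u = e + w := by simp [he]
  have hexp : (⟪v, Q₁₂ u⟫_ℂ).re = (⟪v, Q₁₂ e⟫_ℂ).re + (⟪v, Q₁₂ w⟫_ℂ).re := by
    conv_lhs => rw [hu]
    simp [inner_add_right]
  have hexp2 : (⟪u, Q₂₂ u⟫_ℂ).re = (⟪e, Q₂₂ e⟫_ℂ).re + (⟪e, Q₂₂ w⟫_ℂ).re
      + (⟪w, Q₂₂ e⟫_ℂ).re + (⟪w, Q₂₂ w⟫_ℂ).re := by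
    rw [hu]
    simp only [map_add, inner_add_left, inner_add_right, Complex.add_re]
    ring
  have hexp3 : (⟪e, Q₂₂ u⟫_ℂ).re = (⟪e, Q₂₂ e⟫_ℂ).re + (⟪e, Q₂₂ w⟫_ℂ).re := by
    conv_lhs => rw [hu]
    simp [inner_add_right]
  have key : ε * ‖u‖ ^ 2 ≤
      -(2 * (⟪v, Q₁₂ e⟫_ℂ).re) - (⟪e, Q₂₂ u⟫_ℂ).re - (⟪w, Q₂₂ e⟫_ℂ).re := by
    have h1 := hG₁ u
    rw [hexp, hexp2] at h1
    have h2 := hG₂ v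
    rw [← hw] at h2
    nlinarith [h1, h2, hexp3]
  have bnd1 : -(⟪v, Q₁₂ e⟫_ℂ).re ≤ ‖Q₁₂‖ * ‖G₁‖ * ‖u‖ * ‖e‖ := by
    have h := neg_re_inner_le_norm_mul_norm v (Q₁₂ e)
    have h2 : ‖Q₁₂ e‖ ≤ ‖Q₁₂‖ * ‖e‖ := Q₁₂.le_opNorm e
    have h3 : ‖v‖ ≤ ‖G₁‖ * ‖u‖ := G₁.le_opNorm u
    calc -(⟪v, Q₁₂ e⟫_ℂ).re ≤ ‖v‖ * ‖Q₁₂ e‖ := h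
    _ ≤ (‖G₁‖ * ‖u‖) * (‖Q₁₂‖ * ‖e‖) :=
        mul_le_mul h3 h2 (norm_nonneg _) (by positivity)
    _ = ‖Q₁₂‖ * ‖G₁‖ * ‖u‖ * ‖e‖ := by ring
  have bnd2 : -(⟪e, Q₂₂ u⟫_ℂ).re ≤ ‖Q₂₂‖ * ‖e‖ * ‖u‖ := by
    have h := neg_re_inner_le_norm_mul_norm e (Q₂₂ u)
    have h2 : ‖Q₂₂ u‖ ≤ ‖Q₂₂‖ * ‖u‖ := Q₂₂.le_opNorm u
    nlinarith [norm_nonneg e]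
  have bnd3 : -(⟪w, Q₂₂ e⟫_ℂ).re ≤ ‖Q₂₂‖ * ‖G₂‖ * ‖G₁‖ * ‖u‖ * ‖e‖ := by
    have h := neg_re_inner_le_norm_mul_norm w (Q₂₂ e)
    have h2 : ‖Q₂₂ e‖ ≤ ‖Q₂₂‖ * ‖e‖ := Q₂₂.le_opNorm e
    have h3 : ‖w‖ ≤ ‖G₂‖ * ‖G₁‖ * ‖u‖ := by
      calc ‖w‖ ≤ ‖G₂‖ * ‖v‖ := G₂.le_opNorm v
      _ ≤ ‖G₂‖ * (‖G₁‖ * ‖u‖) :=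
          mul_le_mul_of_nonneg_left (G₁.le_opNorm u) G₂.opNorm_nonneg
      _ = ‖G₂‖ * ‖G₁‖ * ‖u‖ := by ring
    calc -(⟪w, Q₂₂ e⟫_ℂ).re ≤ ‖w‖ * ‖Q₂₂ e‖ := h
    _ ≤ (‖G₂‖ * ‖G₁‖ * ‖u‖) * (‖Q₂₂‖ * ‖e‖) :=
        mul_le_mul h3 h2 (norm_nonneg _) (by positivity)
    _ = ‖Q₂₂‖ * ‖G₂‖ * ‖G₁‖ * ‖u‖ * ‖e‖ := by ring
  have main : ε * ‖u‖ * ‖u‖ ≤ (L + 1) * ‖e‖ * ‖u‖ := by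
    have h0 : 0 ≤ ‖e‖ * ‖u‖ := by positivity
    have hpow : ε * ‖u‖ ^ 2 = ε * ‖u‖ * ‖u‖ := by ring
    rw [hL]
    linarith [key, bnd1, bnd2, bnd3, hpow ▸ key]
  rcases eq_or_ne u 0 with rfl | hu0
  · simp
  · have hun : 0 < ‖u‖ := norm_pos_iff.mpr hu0
    have h5 : ε * ‖u‖ ≤ (L + 1) * ‖e‖ := le_of_mul_le_mul_right main hun
    rw [ge_iff_le, div_mul_eq_mul_div, div_le_iff₀ (by positivity)]
    linarith
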